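/- arXiv:2508.18980 — 2 statements merged into one kernel-verified Lean document; each statement's English description precedes it below -/
import Mathlib

section
/- (Hardy inequality) Let 1 < p < ∞ and f ∈ L^p(0,∞). Then the averaged function F(y) = (1/y)∫₀^y f(t) dt satisfies ∫₀^∞ |F(y)|^p dy ≤ (p/(p−1))^p ∫₀^∞ |f(y)|^p dy. -/
open MeasureTheory Set
open scoped ENNReal NNReal

lemma hardy_swap (w ψ : ℝ → ℝ≥0∞) (hw : Measurable w) (hψ : Measurable ψ) :
    ∫⁻ y in Ioi (0:ℝ), w y * ∫⁻ t in Ioc (0:ℝ) y, ψ t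
      = ∫⁻ t in Ioi (0:ℝ), ψ t * ∫⁻ y in Ici t ∩ Ioi 0, w y := by
  have key : ∀ (y : ℝ) (c : ℝ≥0∞),
      ∫⁻ t in Ioi (0:ℝ), (if t ≤ y then c * ψ t else 0) = c * ∫⁻ t in Ioc (0:ℝ) y, ψ t := by
    intro y c
    have h1 : (fun t => if t ≤ y then c * ψ t else 0) = (Iic y).indicator (fun t => c * ψ t) := by
      ext t; simp [Set.indicator_apply, Set.mem_Iic]
    have h2 : Iic y ∩ Ioi (0:ℝ) = Ioc 0 y := by ext t; simp [mem_Iic, mem_Ioi, mem_Ioc, and_comm]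
    rw [h1, lintegral_indicator measurableSet_Iic, Measure.restrict_restrict measurableSet_Iic,
      h2, lintegral_const_mul _ hψ]
  have key2 : ∀ (t : ℝ) (c : ℝ≥0∞),
      ∫⁻ y in Ioi (0:ℝ), (if t ≤ y then w y * c else 0) = (∫⁻ y in Ici t ∩ Ioi 0, w y) * c := by
    intro t c
    have h1 : (fun y => if t ≤ y then w y * c else 0) = (Ici t).indicator (fun y => w y * c) := by
      ext y; simp [Set.indicator_apply, Set.mem_Ici]
    rw [h1, lintegral_indicator measurableSet_Ici, Measure.restrict_restrict measurableSet_Ici,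
      lintegral_mul_const _ hw]
  have hswap := lintegral_lintegral_swap (μ := volume.restrict (Ioi (0:ℝ)))
    (ν := volume.restrict (Ioi (0:ℝ)))
    (f := fun y t => if t ≤ y then w y * ψ t else 0)
    (Measurable.aemeasurable (by
      apply Measurable.ite (measurableSet_le measurable_snd measurable_fst)
      · exact (hw.comp measurable_fst).mul (hψ.comp measurable_snd)
      · exact measurable_const))
  calc ∫⁻ y in Ioi (0:ℝ), w y * ∫⁻ t in Ioc (0:ℝ) y, ψ t
      = ∫⁻ y in Ioi (0:ℝ), ∫⁻ t in Ioi (0:ℝ), (if t ≤ y then w y * ψ t else 0) := by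
        simp_rw [key]
    _ = ∫⁻ t in Ioi (0:ℝ), ∫⁻ y in Ioi (0:ℝ), (if t ≤ y then w y * ψ t else 0) := hswap
    _ = ∫⁻ t in Ioi (0:ℝ), ψ t * ∫⁻ y in Ici t ∩ Ioi 0, w y := by
        simp_rw [key2]; simp_rw [mul_comm]

lemma hardy_holder {p q a r : ℝ} (hp : 1 < p) (hq : q = p / (p - 1)) (ha : a = (p - 1) / p)
    (hr : r = (p - 1) / p ^ 2) (φ : ℝ → ℝ≥0∞) (hφ : Measurable φ) {y : ℝ} (hy : 0 < y) :
    ∫⁻ t in Ioc (0:ℝ) y, φ t ≤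
      (∫⁻ t in Ioc (0:ℝ) y, φ t ^ p * ENNReal.ofReal (t ^ a)) ^ (1/p) *
        ENNReal.ofReal (y ^ a * q) ^ (1/q) := by
  have hp0 : (0:ℝ) < p := by linarith
  have hp1 : (0:ℝ) < p - 1 := by linarith
  have hpq : p.HolderConjugate q := hq ▸ Real.HolderConjugate.conjExponent hp
  have hrp : r * p = a := by rw [hr, ha]; field_simp
  have hrq : r * q = 1 / p := by rw [hr, hq]; field_simp
  have ha0 : (0:ℝ) < a := by rw [ha]; positivity
  set F1 : ℝ → ℝ≥0∞ := fun t => φ t * ENNReal.ofReal (t ^ r) with hF1def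
  set F2 : ℝ → ℝ≥0∞ := fun t => ENNReal.ofReal (t ^ (-r)) with hF2def
  have hF1 : Measurable F1 := by fun_prop
  have hF2 : Measurable F2 := by fun_prop
  have step1 : ∫⁻ t in Ioc (0:ℝ) y, φ t = ∫⁻ t in Ioc (0:ℝ) y, (F1 * F2) t := by
    refine setLIntegral_congr_fun measurableSet_Ioc (fun t ht => ?_)
    simp only [Pi.mul_apply, hF1def, hF2def]
    rw [mul_assoc, ← ENNReal.ofReal_mul (Real.rpow_nonneg ht.1.le r),
      ← Real.rpow_add ht.1, add_neg_cancel, Real.rpow_zero, ENNReal.ofReal_one, mul_one]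
  have step3 : ∫⁻ t in Ioc (0:ℝ) y, F1 t ^ p
      = ∫⁻ t in Ioc (0:ℝ) y, φ t ^ p * ENNReal.ofReal (t ^ a) := by
    refine setLIntegral_congr_fun measurableSet_Ioc (fun t ht => ?_)
    simp only [hF1def]
    rw [ENNReal.mul_rpow_of_nonneg _ _ hp0.le,
      ENNReal.ofReal_rpow_of_nonneg (Real.rpow_nonneg ht.1.le r) hp0.le,
      ← Real.rpow_mul ht.1.le, hrp]
  have step4 : ∫⁻ t in Ioc (0:ℝ) y, F2 t ^ q = ENNReal.ofReal (y ^ a * q) := by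
    have hqpos : (0:ℝ) < q := by rw [hq]; positivity
    have hcongr : ∫⁻ t in Ioc (0:ℝ) y, F2 t ^ q
        = ∫⁻ t in Ioc (0:ℝ) y, ENNReal.ofReal (t ^ (-(1/p))) := by
      refine setLIntegral_congr_fun measurableSet_Ioc (fun t ht => ?_)
      simp only [hF2def]
      rw [ENNReal.ofReal_rpow_of_nonneg (Real.rpow_nonneg ht.1.le _) hqpos.le,
        ← Real.rpow_mul ht.1.le, neg_mul, hrq]
    have hint : IntegrableOn (fun t : ℝ => t ^ (-(1/p))) (Ioc 0 y) :=
      (intervalIntegral.intervalIntegrable_rpow' (by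
        rw [neg_lt_neg_iff]; rw [div_lt_iff₀ hp0]; linarith : (-1:ℝ) < -(1/p))).1
    have hval : ∫ t in Ioc (0:ℝ) y, t ^ (-(1/p)) = y ^ a * q := by
      rw [← intervalIntegral.integral_of_le hy.le,
        integral_rpow (Or.inl (by rw [neg_lt_neg_iff, div_lt_iff₀ hp0]; linarith))]
      have h1 : -(1/p) + 1 = a := by rw [ha]; field_simp; ring
      rw [h1, Real.zero_rpow ha0.ne', sub_zero, hq, ha]
      field_simp
    rw [hcongr, ← ofReal_integral_eq_lintegral_ofReal hint
      ((ae_restrict_iff' measurableSet_Ioc).2 (ae_of_all _ fun t ht =>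
        Real.rpow_nonneg ht.1.le _)), hval]
  calc ∫⁻ t in Ioc (0:ℝ) y, φ t = ∫⁻ t in Ioc (0:ℝ) y, (F1 * F2) t := step1
    _ ≤ (∫⁻ t in Ioc (0:ℝ) y, F1 t ^ p) ^ (1/p) * (∫⁻ t in Ioc (0:ℝ) y, F2 t ^ q) ^ (1/q) :=
        ENNReal.lintegral_mul_le_Lp_mul_Lq _ hpq hF1.aemeasurable hF2.aemeasurable
    _ = _ := by rw [step3, step4]


/-- Hardy's inequality: for `1 < p < ∞` and `f ∈ L^p(0,∞)`, the Hardy average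
`F(y) = (1/y)∫₀^y f` satisfies `∫₀^∞ |F|^p ≤ (p/(p-1))^p ∫₀^∞ |f|^p`. -/
theorem hardy_inequality (p : ℝ) (hp : 1 < p) (f : ℝ → ℝ)
    (hmeas : Measurable f)
    (hf : IntegrableOn (fun y => |f y| ^ p) (Set.Ioi 0)) :
    ∫ y in Set.Ioi (0:ℝ), |(∫ t in Set.Ioc (0:ℝ) y, f t) / y| ^ p
      ≤ (p / (p - 1)) ^ p * ∫ y in Set.Ioi (0:ℝ), |f y| ^ p := by
  have hp0 : (0:ℝ) < p := by linarith
  have hp1 : (0:ℝ) < p - 1 := by linarith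
  set q : ℝ := p / (p - 1) with hq
  have hq0 : (0:ℝ) < q := by rw [hq]; positivity
  set a : ℝ := (p - 1) / p with ha
  have ha0 : (0:ℝ) < a := by rw [ha]; positivity
  set s : ℝ := a * (p - 1) - p with hs
  have hs1 : s < -1 := by
    rw [hs, ha]; rw [div_mul_eq_mul_div, div_sub' hp0.ne', div_lt_iff₀ hp0]; nlinarith
  have hsa : s + 1 = -a := by rw [hs, ha]; field_simp; ring
  set φ : ℝ → ℝ≥0∞ := fun t => (‖f t‖₊ : ℝ≥0∞) with hφ
  have hφm : Measurable φ := by fun_prop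
  set ψ : ℝ → ℝ≥0∞ := fun t => φ t ^ p * ENNReal.ofReal (t ^ a) with hψ
  have hψm : Measurable ψ := by fun_prop
  set w : ℝ → ℝ≥0∞ := fun y => ENNReal.ofReal y ^ s with hw
  have hwm : Measurable w := by fun_prop
  -- RHS as lintegral
  have hφp : ∀ t : ℝ, φ t ^ p = ENNReal.ofReal (|f t| ^ p) := by
    intro t
    rw [hφ]
    simp only
    rw [← enorm_eq_nnnorm, Real.enorm_eq_ofReal_abs, ENNReal.ofReal_rpow_of_nonneg (abs_nonneg _) hp0.le]
  have hIR : ∫⁻ t in Ioi (0:ℝ), φ t ^ p = ENNReal.ofReal (∫ t in Ioi (0:ℝ), |f t| ^ p) := by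
    rw [ofReal_integral_eq_lintegral_ofReal hf
      (ae_of_all _ fun t => Real.rpow_nonneg (abs_nonneg _) _)]
    exact lintegral_congr fun t => hφp t
  have hIRfin : ∫⁻ t in Ioi (0:ℝ), φ t ^ p ≠ ⊤ := by rw [hIR]; exact ENNReal.ofReal_ne_top
  -- pointwise bound
  have hpt : ∀ y : ℝ, 0 < y →
      ENNReal.ofReal (|(∫ t in Set.Ioc (0:ℝ) y, f t) / y| ^ p)
        ≤ ENNReal.ofReal (q ^ (p - 1)) * (w y * ∫⁻ t in Ioc (0:ℝ) y, ψ t) := by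
    intro y hy
    set X : ℝ≥0∞ := ∫⁻ t in Ioc (0:ℝ) y, ψ t with hX
    have hA : ENNReal.ofReal |∫ t in Set.Ioc (0:ℝ) y, f t| ≤ ∫⁻ t in Ioc (0:ℝ) y, φ t := by
      rw [← Real.enorm_eq_ofReal_abs]
      exact enorm_integral_le_lintegral_enorm _
    have hXC : ENNReal.ofReal |∫ t in Set.Ioc (0:ℝ) y, f t|
        ≤ X ^ (1/p) * ENNReal.ofReal (y ^ a * q) ^ (1/q) :=
      le_trans hA (hardy_holder hp hq ha rfl φ hφm hy)
    have hpow := ENNReal.rpow_le_rpow hXC hp0.le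
    rw [ENNReal.mul_rpow_of_nonneg _ _ hp0.le, ← ENNReal.rpow_mul, ← ENNReal.rpow_mul,
      one_div_mul_cancel hp0.ne', ENNReal.rpow_one] at hpow
    have hq_exp : 1 / q * p = p - 1 := by rw [hq]; field_simp
    rw [hq_exp] at hpow
    have hLHS : ENNReal.ofReal (|(∫ t in Set.Ioc (0:ℝ) y, f t) / y| ^ p)
        = (ENNReal.ofReal |∫ t in Set.Ioc (0:ℝ) y, f t|) ^ p * (ENNReal.ofReal y) ^ (-p) := by
      rw [abs_div, abs_of_pos hy,
        ← ENNReal.ofReal_rpow_of_nonneg (div_nonneg (abs_nonneg _) hy.le) hp0.le,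
        ENNReal.ofReal_div_of_pos hy, ENNReal.div_rpow_of_nonneg _ _ hp0.le,
        ENNReal.rpow_neg, div_eq_mul_inv]
    have hyne : ENNReal.ofReal y ≠ 0 := (ENNReal.ofReal_pos.mpr hy).ne'
    have hy2 : ENNReal.ofReal y ^ (a * (p - 1)) * ENNReal.ofReal y ^ (-p)
        = ENNReal.ofReal y ^ s := by
      rw [← ENNReal.rpow_add _ _ hyne ENNReal.ofReal_ne_top, ← sub_eq_add_neg, ← hs]
    have hsplit : ENNReal.ofReal (y ^ a * q) ^ (p - 1) * (ENNReal.ofReal y) ^ (-p)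
        = ENNReal.ofReal (q ^ (p - 1)) * w y := by
      rw [ENNReal.ofReal_mul (Real.rpow_nonneg hy.le _),
        ENNReal.mul_rpow_of_nonneg _ _ hp1.le,
        ← ENNReal.ofReal_rpow_of_pos hy, ← ENNReal.rpow_mul,
        ENNReal.ofReal_rpow_of_nonneg hq0.le hp1.le, hw]
      simp only
      rw [← hy2]
      ring
    calc ENNReal.ofReal (|(∫ t in Set.Ioc (0:ℝ) y, f t) / y| ^ p)
        = (ENNReal.ofReal |∫ t in Set.Ioc (0:ℝ) y, f t|) ^ p * (ENNReal.ofReal y) ^ (-p) := hLHS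
      _ ≤ (X * ENNReal.ofReal (y ^ a * q) ^ (p - 1)) * (ENNReal.ofReal y) ^ (-p) :=
          mul_le_mul_left hpow _
      _ = X * (ENNReal.ofReal (y ^ a * q) ^ (p - 1) * (ENNReal.ofReal y) ^ (-p)) := by
          rw [mul_assoc]
      _ = X * (ENNReal.ofReal (q ^ (p - 1)) * w y) := by rw [hsplit]
      _ = ENNReal.ofReal (q ^ (p - 1)) * (w y * X) := by ring
  -- main lintegral chain
  have main : ∫⁻ y in Ioi (0:ℝ), ENNReal.ofReal (|(∫ t in Set.Ioc (0:ℝ) y, f t) / y| ^ p)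
      ≤ ENNReal.ofReal (q ^ p) * ∫⁻ t in Ioi (0:ℝ), φ t ^ p := by
    calc ∫⁻ y in Ioi (0:ℝ), ENNReal.ofReal (|(∫ t in Set.Ioc (0:ℝ) y, f t) / y| ^ p)
        ≤ ∫⁻ y in Ioi (0:ℝ), ENNReal.ofReal (q ^ (p - 1)) * (w y * ∫⁻ t in Ioc (0:ℝ) y, ψ t) :=
          lintegral_mono_ae ((ae_restrict_iff' measurableSet_Ioi).2
            (ae_of_all _ fun y hy => hpt y hy))
      _ = ENNReal.ofReal (q ^ (p - 1)) * ∫⁻ y in Ioi (0:ℝ), w y * ∫⁻ t in Ioc (0:ℝ) y, ψ t :=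
          lintegral_const_mul' _ _ ENNReal.ofReal_ne_top
      _ = ENNReal.ofReal (q ^ (p - 1)) * ∫⁻ t in Ioi (0:ℝ), ψ t * ∫⁻ y in Ici t ∩ Ioi 0, w y := by
          rw [hardy_swap w ψ hwm hψm]
      _ = ENNReal.ofReal (q ^ (p - 1)) * ∫⁻ t in Ioi (0:ℝ), φ t ^ p * ENNReal.ofReal q := by
          congr 1
          refine setLIntegral_congr_fun measurableSet_Ioi (fun t ht => ?_)
          have ht0 : (0:ℝ) < t := ht
          have h1 : Ici t ∩ Ioi (0:ℝ) = Ici t :=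
            inter_eq_left.mpr fun z hz => lt_of_lt_of_le ht0 hz
          have h2 : ∫⁻ z in Ioi t, w z = ENNReal.ofReal (t ^ (-a) * q) := by
            rw [setLIntegral_congr_fun measurableSet_Ioi
                (fun z hz => ENNReal.ofReal_rpow_of_pos (ht0.trans hz)),
              ← ofReal_integral_eq_lintegral_ofReal (integrableOn_Ioi_rpow_of_lt hs1 ht0)
                ((ae_restrict_iff' measurableSet_Ioi).2
                  (ae_of_all _ fun z hz => Real.rpow_nonneg (ht0.trans hz).le _)),
              integral_Ioi_rpow_of_lt hs1 ht0]
            congr 1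
            rw [hsa]
            have hqa : q = 1 / a := by rw [hq, ha, one_div_div]
            rw [hqa]
            field_simp
          have hta : ENNReal.ofReal (t ^ a) * ENNReal.ofReal (t ^ (-a)) = 1 := by
            rw [← ENNReal.ofReal_mul (Real.rpow_nonneg ht0.le _), ← Real.rpow_add ht0,
              add_neg_cancel, Real.rpow_zero, ENNReal.ofReal_one]
          rw [h1, ← MeasureTheory.restrict_Ioi_eq_restrict_Ici, h2, hψ]
          simp only
          rw [ENNReal.ofReal_mul (Real.rpow_nonneg ht0.le _),
            show φ t ^ p * ENNReal.ofReal (t ^ a)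
                * (ENNReal.ofReal (t ^ (-a)) * ENNReal.ofReal q)
              = ENNReal.ofReal (t ^ a) * ENNReal.ofReal (t ^ (-a))
                * (φ t ^ p * ENNReal.ofReal q) from by ring, hta, one_mul]
      _ = ENNReal.ofReal (q ^ (p - 1)) * ((∫⁻ t in Ioi (0:ℝ), φ t ^ p) * ENNReal.ofReal q) := by
          rw [lintegral_mul_const' _ _ ENNReal.ofReal_ne_top]
      _ = ENNReal.ofReal (q ^ p) * ∫⁻ t in Ioi (0:ℝ), φ t ^ p := by
          rw [← mul_assoc, mul_right_comm, ← ENNReal.ofReal_mul (Real.rpow_nonneg hq0.le _),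
            ← Real.rpow_add_one hq0.ne', sub_add_cancel]
  -- integrability of f on bounded intervals
  have hfInt : ∀ y : ℝ, 0 < y → IntegrableOn f (Ioc 0 y) := by
    intro y hy
    refine ⟨hmeas.aestronglyMeasurable, ?_⟩
    have h2 : ∫⁻ t in Ioc (0:ℝ) y, ψ t
        ≤ ENNReal.ofReal (y ^ a) * ∫⁻ t in Ioi (0:ℝ), φ t ^ p := by
      calc ∫⁻ t in Ioc (0:ℝ) y, ψ t
          ≤ ∫⁻ t in Ioc (0:ℝ) y, ENNReal.ofReal (y ^ a) * φ t ^ p := by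
            refine lintegral_mono_ae ((ae_restrict_iff' measurableSet_Ioc).2
              (ae_of_all _ fun t ht => ?_))
            rw [hψ]
            simp only
            rw [mul_comm]
            exact mul_le_mul_left
              (ENNReal.ofReal_le_ofReal (Real.rpow_le_rpow ht.1.le ht.2 ha0.le)) _
        _ = ENNReal.ofReal (y ^ a) * ∫⁻ t in Ioc (0:ℝ) y, φ t ^ p :=
            lintegral_const_mul' _ _ ENNReal.ofReal_ne_top
        _ ≤ ENNReal.ofReal (y ^ a) * ∫⁻ t in Ioi (0:ℝ), φ t ^ p :=
            mul_le_mul_right (lintegral_mono_set Ioc_subset_Ioi_self) _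
    have hXfin : ∫⁻ t in Ioc (0:ℝ) y, ψ t ≠ ⊤ :=
      (lt_of_le_of_lt h2 (ENNReal.mul_lt_top ENNReal.ofReal_lt_top
        (lt_top_iff_ne_top.2 hIRfin))).ne
    have h3 : ∫⁻ t in Ioc (0:ℝ) y, φ t < ⊤ := by
      refine lt_of_le_of_lt (hardy_holder hp hq ha rfl φ hφm hy) ?_
      exact ENNReal.mul_lt_top (ENNReal.rpow_lt_top_of_nonneg (by positivity) hXfin)
        (ENNReal.rpow_lt_top_of_nonneg (by positivity) ENNReal.ofReal_ne_top)
    exact h3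
  -- measurability of the averaged function
  set g : ℝ → ℝ := (Ioi (0:ℝ)).indicator f with hg
  have hgInt : ∀ u v : ℝ, IntervalIntegrable g volume u v := by
    intro u v
    rw [intervalIntegrable_iff]
    have : IntegrableOn f (Ioi 0 ∩ Set.uIoc u v) := by
      refine (hfInt (max (max u v) 1) (by positivity)).mono_set fun t ht => ?_
      exact ⟨ht.1, le_trans ht.2.2 (le_max_left _ _)⟩
    rw [IntegrableOn, hg, integrable_indicator_iff measurableSet_Ioi]
    rw [IntegrableOn, Measure.restrict_restrict measurableSet_Ioi]
    exact this
  have hHcont : Continuous fun y => ∫ t in (0:ℝ)..y, g t :=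
    intervalIntegral.continuous_primitive hgInt 0
  have hGsm : AEStronglyMeasurable
      (fun y => |(∫ t in Set.Ioc (0:ℝ) y, f t) / y| ^ p) (volume.restrict (Ioi (0:ℝ))) := by
    have hmeasG : Measurable fun y => |(∫ t in (0:ℝ)..y, g t) / y| ^ p := by
      fun_prop
    refine hmeasG.aestronglyMeasurable.congr ?_
    refine ((ae_restrict_iff' measurableSet_Ioi).2 (ae_of_all _ fun y hy => ?_))
    have hy0 : (0:ℝ) < y := hy
    have heq : ∫ t in (0:ℝ)..y, g t = ∫ t in Set.Ioc (0:ℝ) y, f t := by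
      rw [intervalIntegral.integral_of_le hy0.le]
      refine setIntegral_congr_fun measurableSet_Ioc fun t ht => ?_
      rw [hg]
      exact indicator_of_mem (mem_Ioi.2 ht.1) f
    simp only
    rw [heq]
  -- conclude
  have hnn : 0 ≤ᵐ[volume.restrict (Ioi (0:ℝ))]
      fun y => |(∫ t in Set.Ioc (0:ℝ) y, f t) / y| ^ p :=
    ae_of_all _ fun y => Real.rpow_nonneg (abs_nonneg _) _
  rw [integral_eq_lintegral_of_nonneg_ae hnn hGsm]
  have hIRnn : 0 ≤ ∫ t in Ioi (0:ℝ), |f t| ^ p :=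
    integral_nonneg fun t => Real.rpow_nonneg (abs_nonneg _) _
  calc (∫⁻ y in Ioi (0:ℝ), ENNReal.ofReal (|(∫ t in Set.Ioc (0:ℝ) y, f t) / y| ^ p)).toReal
      ≤ (ENNReal.ofReal (q ^ p * ∫ t in Ioi (0:ℝ), |f t| ^ p)).toReal := by
        refine ENNReal.toReal_mono ENNReal.ofReal_ne_top ?_
        rw [ENNReal.ofReal_mul (Real.rpow_nonneg hq0.le _), ← hIR]
        exact main
    _ = q ^ p * ∫ t in Ioi (0:ℝ), |f t| ^ p :=
        ENNReal.toReal_ofReal (mul_nonneg (Real.rpow_nonneg hq0.le _) hIRnn)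
end

section
/- Let W ∈ H¹(ℝ²₊) vanish at y = 0 (trace zero), and let w^b(x,z) be a smooth function with ‖⟨z⟩ ∂_z w^b‖_{L^∞} < ∞, evaluated at z = y/√ε for ε > 0. Then for any vector field U = (U₁,U₂) ∈ H¹(ℝ²₊)² with U₂(x,0) = 0, the integral ∫_{ℝ²₊} U₂(x,y) · ε^{-1/2} ∂_z w^b(x, y/√ε) · W(x,y) dx dy is bounded in absolute value by ‖∂_y U₂‖_{L²(ℝ²₊)} · ‖⟨z⟩∂_z w^b‖_{L^∞} · ‖W‖_{L²(ℝ²₊)}, uniformly in ε. -/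
open MeasureTheory Set

private lemma key_ineq (l s r u w : ℝ) (hl : 0 < l) (hs : 0 < s) (hr : 0 < r) :
    |u| * |w| / (r * r) ≤
      l / 2 * u ^ 2 * (s / ((r * r) * r)) + 1 / (2 * l) * w ^ 2 * (1 / (s * r)) := by
  have h2 : 0 ≤ l * l * (s * s) * u ^ 2 + (r * r) * w ^ 2 - 2 * l * s * r * (|u| * |w|) := by
    have e : (l * s * |u| - r * |w|) ^ 2
        = l * l * (s * s) * u ^ 2 + (r * r) * w ^ 2 - 2 * l * s * r * (|u| * |w|) := by
      rw [← sq_abs u, ← sq_abs w]; ring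
    linarith [e ▸ sq_nonneg (l * s * |u| - r * |w|)]
  have hexp : l / 2 * u ^ 2 * (s / ((r * r) * r)) + 1 / (2 * l) * w ^ 2 * (1 / (s * r))
      - |u| * |w| / (r * r)
      = (l * l * (s * s) * u ^ 2 + (r * r) * w ^ 2 - 2 * l * s * r * (|u| * |w|))
        / (2 * l * s * ((r * r) * r)) := by
    field_simp
  have h3 := div_nonneg h2 (by positivity : (0:ℝ) ≤ 2 * l * s * ((r * r) * r))
  linarith [hexp ▸ h3]

private lemma key_ineq' (M l u w t y : ℝ) (hM : 0 ≤ M) (hl : 0 < l) (ht : 0 < t) (hy : 0 < y) :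
    M * (|u| * |w|) / y ≤
      (M * l / 2 * u ^ 2 * Real.sqrt t) * (1 / (y * Real.sqrt y))
        + (M / (2 * l) * w ^ 2 / Real.sqrt y) * (1 / Real.sqrt t) := by
  have hs : 0 < Real.sqrt t := Real.sqrt_pos.2 ht
  have hr : 0 < Real.sqrt y := Real.sqrt_pos.2 hy
  have h := key_ineq l (Real.sqrt t) (Real.sqrt y) u w hl hs hr
  rw [Real.mul_self_sqrt hy.le] at h
  calc M * (|u| * |w|) / y = M * (|u| * |w| / y) := by ring
    _ ≤ M * (l / 2 * u ^ 2 * (Real.sqrt t / (y * Real.sqrt y))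
          + 1 / (2 * l) * w ^ 2 * (1 / (Real.sqrt t * Real.sqrt y))) :=
        mul_le_mul_of_nonneg_left h hM
    _ = _ := by ring

private lemma le_two_sqrt_mul {C P Q : ℝ} (hP : 0 ≤ P) (hQ : 0 ≤ Q)
    (h : ∀ l : ℝ, 0 < l → C ≤ l * P + Q / l) :
    C ≤ 2 * Real.sqrt P * Real.sqrt Q := by
  have hRnn : 0 ≤ 2 * Real.sqrt P * Real.sqrt Q := by positivity
  rcases hP.eq_or_lt with hP0 | hP0
  · -- P = 0
    have hC : C ≤ 0 := by
      by_contra hc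
      push_neg at hc
      have h1 := h ((Q + 1) / C) (by positivity)
      rw [← hP0] at h1
      have h2 : Q / ((Q + 1) / C) = Q * C / (Q + 1) := by
        field_simp
      have h3 : Q * C / (Q + 1) < C := by
        rw [div_lt_iff₀ (by linarith)]
        nlinarith
      simp only [mul_zero, zero_add] at h1
      rw [h2] at h1
      linarith
    linarith
  rcases hQ.eq_or_lt with hQ0 | hQ0
  · have hC : C ≤ 0 := by
      by_contra hc
      push_neg at hc
      have h1 := h (C / (2 * P)) (by positivity)
      rw [← hQ0] at h1
      have : C / (2 * P) * P = C / 2 := by field_simp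
      rw [this] at h1
      simp only [zero_div] at h1
      linarith
    linarith
  · have hsP : (0:ℝ) < Real.sqrt P := Real.sqrt_pos.2 hP0
    have hsQ : (0:ℝ) < Real.sqrt Q := Real.sqrt_pos.2 hQ0
    have hPe : Real.sqrt P * Real.sqrt P = P := Real.mul_self_sqrt hP
    have hQe : Real.sqrt Q * Real.sqrt Q = Q := Real.mul_self_sqrt hQ
    calc C ≤ (Real.sqrt Q / Real.sqrt P) * P + Q / (Real.sqrt Q / Real.sqrt P) :=
          h _ (by positivity)
      _ = 2 * Real.sqrt P * Real.sqrt Q := by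
          field_simp
          nlinarith [hPe, hQe]
open scoped NNReal ENNReal

private lemma lintegral_triangle_swap (F : ℝ → ℝ → ℝ≥0∞)
    (hF : Measurable fun p : ℝ × ℝ => F p.1 p.2) :
    ∫⁻ y in Ioi (0:ℝ), ∫⁻ t in Ioo 0 y, F t y
      = ∫⁻ t in Ioi (0:ℝ), ∫⁻ y in Ioi t, F t y := by
  set T : Set (ℝ × ℝ) := {p : ℝ × ℝ | 0 < p.1 ∧ p.1 < p.2} with hT
  have hTm : MeasurableSet T :=
    (measurableSet_lt measurable_const measurable_fst).inter
      (measurableSet_lt measurable_fst measurable_snd)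
  set G : ℝ × ℝ → ℝ≥0∞ := T.indicator (fun p => F p.1 p.2) with hG
  have hGm : Measurable G := hF.indicator hTm
  have h1 : ∫⁻ y in Ioi (0:ℝ), ∫⁻ t in Ioo 0 y, F t y = ∫⁻ y, ∫⁻ t, G (t, y) := by
    rw [← lintegral_indicator measurableSet_Ioi]
    refine lintegral_congr fun y => ?_
    rcases lt_or_ge 0 y with hy | hy
    · rw [indicator_of_mem (mem_Ioi.2 hy), ← lintegral_indicator measurableSet_Ioo]
      refine lintegral_congr fun t => ?_
      by_cases ht : t ∈ Ioo (0:ℝ) y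
      · rw [indicator_of_mem ht, hG, indicator_of_mem]
        exact ⟨ht.1, ht.2⟩
      · rw [indicator_of_notMem ht, hG, indicator_of_notMem]
        intro hmem
        exact ht ⟨hmem.1, hmem.2⟩
    · rw [indicator_of_notMem (by simpa using hy)]
      symm
      simp only [hG]
      rw [← lintegral_zero]
      refine lintegral_congr fun t => ?_
      rw [indicator_of_notMem]
      rintro ⟨h1, h2⟩
      linarith
  have h2 : ∫⁻ t in Ioi (0:ℝ), ∫⁻ y in Ioi t, F t y = ∫⁻ t, ∫⁻ y, G (t, y) := by
    rw [← lintegral_indicator measurableSet_Ioi]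
    refine lintegral_congr fun t => ?_
    rcases lt_or_ge 0 t with ht | ht
    · rw [indicator_of_mem (mem_Ioi.2 ht), ← lintegral_indicator measurableSet_Ioi]
      refine lintegral_congr fun y => ?_
      by_cases hy : y ∈ Ioi t
      · rw [indicator_of_mem hy, hG, indicator_of_mem]
        exact ⟨ht, hy⟩
      · rw [indicator_of_notMem hy, hG, indicator_of_notMem]
        intro hmem
        exact hy hmem.2
    · rw [indicator_of_notMem (by simpa using ht)]
      symm
      simp only [hG]
      rw [← lintegral_zero]
      refine lintegral_congr fun y => ?_
      rw [indicator_of_notMem]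
      rintro ⟨h1, h2⟩
      linarith
  rw [h1, h2]
  have hm : AEMeasurable (Function.uncurry fun t y => G (t, y))
      ((volume : Measure ℝ).prod volume) := hGm.aemeasurable
  exact (lintegral_lintegral_swap hm).symm

private lemma lint_t {y : ℝ} (hy : 0 < y) :
    ∫⁻ t in Ioo (0:ℝ) y, ENNReal.ofReal (1 / Real.sqrt t)
      = ENNReal.ofReal (2 * Real.sqrt y) := by
  have heq : ∀ t ∈ Ioo (0:ℝ) y, t ^ (-(1:ℝ)/2) = 1 / Real.sqrt t := by
    intro t ht
    rw [Real.sqrt_eq_rpow, one_div, ← Real.rpow_neg ht.1.le]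
    norm_num
  have hint : IntegrableOn (fun t : ℝ => 1 / Real.sqrt t) (Ioo 0 y) := by
    have h1 : IntervalIntegrable (fun t : ℝ => t ^ (-(1:ℝ)/2)) volume 0 y :=
      intervalIntegral.intervalIntegrable_rpow' (by norm_num)
    exact ((intervalIntegrable_iff_integrableOn_Ioo_of_le hy.le).1 h1).congr_fun
      heq measurableSet_Ioo
  rw [← ofReal_integral_eq_lintegral_ofReal hint
      (Filter.Eventually.of_forall fun t => by positivity)]
  congr 1
  rw [← setIntegral_congr_fun measurableSet_Ioo heq,
    ← MeasureTheory.integral_Ioc_eq_integral_Ioo,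
    ← intervalIntegral.integral_of_le hy.le,
    integral_rpow (Or.inl (by norm_num))]
  rw [Real.sqrt_eq_rpow]
  have : (0:ℝ) ^ (-(1:ℝ)/2 + 1) = 0 := by
    rw [Real.zero_rpow (by norm_num)]
  rw [this]
  norm_num
  ring

private lemma lint_y {t : ℝ} (ht : 0 < t) :
    ∫⁻ y in Ioi t, ENNReal.ofReal (1 / (y * Real.sqrt y))
      = ENNReal.ofReal (2 / Real.sqrt t) := by
  have heq : ∀ y ∈ Ioi t, y ^ (-(3:ℝ)/2) = 1 / (y * Real.sqrt y) := by
    intro y hy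
    have hy0 : 0 < y := ht.trans hy
    rw [show (-(3:ℝ)/2) = -((3:ℝ)/2) by ring, Real.rpow_neg hy0.le,
      show (3:ℝ)/2 = 1 + 1/2 by norm_num, Real.rpow_add hy0, Real.rpow_one,
      ← Real.sqrt_eq_rpow, one_div]
  have hint : IntegrableOn (fun y : ℝ => 1 / (y * Real.sqrt y)) (Ioi t) := by
    exact (integrableOn_Ioi_rpow_of_lt (by norm_num : (-(3:ℝ)/2) < -1) ht).congr_fun
      heq measurableSet_Ioi
  rw [← ofReal_integral_eq_lintegral_ofReal hint
      ((ae_restrict_iff' measurableSet_Ioi).2 (Filter.Eventually.of_forall fun y hy => by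
        have h0 : 0 < y := ht.trans hy
        positivity))]
  congr 1
  rw [← setIntegral_congr_fun measurableSet_Ioi heq,
    integral_Ioi_rpow_of_lt (by norm_num : (-(3:ℝ)/2) < -1) ht]
  have : (-(3:ℝ)/2 + 1) = -(1/2) := by norm_num
  rw [this, Real.rpow_neg ht.le, ← Real.sqrt_eq_rpow]
  field_simp

/-- The Hardy-inequality trick for the singular boundary-layer term: for `U₂` with
zero trace and `|⟨z⟩ ∂_z w^b| ≤ M`,
`|∫ U₂ · ε^{-1/2} ∂_z w^b(x, y/√ε) · W| ≤ 2‖∂_y U₂‖ M ‖W‖`, uniformly in `ε`. -/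
theorem hardy_trick
    (ε M : ℝ) (hε : 0 < ε) (hM : 0 ≤ M)
    (U₂ Uy W wz : ℝ → ℝ → ℝ)
    (hU₂0 : ∀ x, U₂ x 0 = 0)
    (hU₂cont : Continuous fun p : ℝ × ℝ => U₂ p.1 p.2)
    (hUy : ∀ x y, HasDerivAt (U₂ x) (Uy x y) y)
    (hUycont : Continuous fun p : ℝ × ℝ => Uy p.1 p.2)
    (hWcont : Continuous fun p : ℝ × ℝ => W p.1 p.2)
    (hwzcont : Continuous fun p : ℝ × ℝ => wz p.1 p.2)
    (hbound : ∀ x z, 0 ≤ z → |Real.sqrt (1 + z ^ 2) * wz x z| ≤ M)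
    (hUyint : Integrable (fun p : ℝ × ℝ => (Uy p.1 p.2) ^ 2)
      (volume.restrict {p : ℝ × ℝ | 0 < p.2}))
    (hWint : Integrable (fun p : ℝ × ℝ => (W p.1 p.2) ^ 2)
      (volume.restrict {p : ℝ × ℝ | 0 < p.2}))
    (hprod : Integrable
      (fun p : ℝ × ℝ =>
        U₂ p.1 p.2 * (ε ^ (-(1:ℝ)/2) * wz p.1 (p.2 / Real.sqrt ε)) * W p.1 p.2)
      (volume.restrict {p : ℝ × ℝ | 0 < p.2})) :
    |∫ p in {p : ℝ × ℝ | 0 < p.2},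
        U₂ p.1 p.2 * (ε ^ (-(1:ℝ)/2) * wz p.1 (p.2 / Real.sqrt ε)) * W p.1 p.2| ≤
      2 * Real.sqrt (∫ p in {p : ℝ × ℝ | 0 < p.2}, (Uy p.1 p.2) ^ 2) * M *
        Real.sqrt (∫ p in {p : ℝ × ℝ | 0 < p.2}, (W p.1 p.2) ^ 2) := by
  have hsε : (0:ℝ) < Real.sqrt ε := Real.sqrt_pos.2 hε
  set S : Set (ℝ × ℝ) := {p : ℝ × ℝ | 0 < p.2} with hSdef
  set f : ℝ × ℝ → ℝ := fun p =>
    U₂ p.1 p.2 * (ε ^ (-(1:ℝ)/2) * wz p.1 (p.2 / Real.sqrt ε)) * W p.1 p.2 with hfdef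
  set A := ∫ p in S, (Uy p.1 p.2) ^ 2 with hAdef
  set B := ∫ p in S, (W p.1 p.2) ^ 2 with hBdef
  have hA0 : 0 ≤ A := integral_nonneg fun p => sq_nonneg _
  have hB0 : 0 ≤ B := integral_nonneg fun p => sq_nonneg _
  have hwcomp : Continuous fun p : ℝ × ℝ => wz p.1 (p.2 / Real.sqrt ε) :=
    hwzcont.comp (continuous_fst.prodMk (continuous_snd.div_const _))
  have hfc : Continuous f := (hU₂cont.mul (continuous_const.mul hwcomp)).mul hWcont
  have hS : S = (univ : Set ℝ) ×ˢ Ioi (0:ℝ) := by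
    ext p; simp [hSdef]
  have hrestrict : (volume : Measure (ℝ × ℝ)).restrict S
      = (volume : Measure ℝ).prod ((volume : Measure ℝ).restrict (Ioi 0)) := by
    rw [hS, Measure.volume_eq_prod, ← Measure.prod_restrict, Measure.restrict_univ]
  have hUyint' : ∫⁻ p in S, ENNReal.ofReal (Uy p.1 p.2 ^ 2) = ENNReal.ofReal A :=
    (ofReal_integral_eq_lintegral_ofReal hUyint
      (Filter.Eventually.of_forall fun p => sq_nonneg _)).symm
  have hWint' : ∫⁻ p in S, ENNReal.ofReal (W p.1 p.2 ^ 2) = ENNReal.ofReal B :=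
    (ofReal_integral_eq_lintegral_ofReal hWint
      (Filter.Eventually.of_forall fun p => sq_nonneg _)).symm
  have main : ∀ l : ℝ, 0 < l → |∫ p in S, f p| ≤ l * (M * A) + (M * B) / l := by
    intro l hl
    -- the inner (per-x) estimate
    have inner : ∀ x : ℝ,
        (∫⁻ y in Ioi (0:ℝ), ENNReal.ofReal |f (x, y)|)
          ≤ (∫⁻ t in Ioi (0:ℝ), ENNReal.ofReal (l * M * Uy x t ^ 2))
            + ∫⁻ y in Ioi (0:ℝ), ENNReal.ofReal (M / l * W x y ^ 2) := by
      intro x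
      have hcontx : Continuous fun t => Uy x t :=
        hUycont.comp (continuous_const.prodMk continuous_id)
      -- pointwise-in-y bound by a t-integral
      have ha : ∀ y : ℝ, 0 < y → ENNReal.ofReal |f (x, y)| ≤
          ∫⁻ t in Ioo (0:ℝ) y,
            (ENNReal.ofReal ((M * l / 2 * Uy x t ^ 2 * Real.sqrt t) * (1 / (y * Real.sqrt y)))
              + ENNReal.ofReal ((M / (2 * l) * W x y ^ 2 / Real.sqrt y) * (1 / Real.sqrt t))) := by
        intro y hy
        set z := y / Real.sqrt ε with hzdef
        have hz : 0 < z := div_pos hy hsε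
        have hzle : z ≤ Real.sqrt (1 + z ^ 2) := by
          calc z = Real.sqrt (z ^ 2) := (Real.sqrt_sq hz.le).symm
            _ ≤ _ := Real.sqrt_le_sqrt (by nlinarith)
        have hzwz : z * |wz x z| ≤ M := by
          calc z * |wz x z| ≤ Real.sqrt (1 + z ^ 2) * |wz x z| :=
                mul_le_mul_of_nonneg_right hzle (abs_nonneg _)
            _ = |Real.sqrt (1 + z ^ 2) * wz x z| := by
                rw [abs_mul, abs_of_nonneg (Real.sqrt_nonneg _)]
            _ ≤ M := hbound x z hz.le
        have hepow : ε ^ (-(1:ℝ)/2) = 1 / Real.sqrt ε := by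
          rw [show (-(1:ℝ)/2) = -(1/2) by ring, Real.rpow_neg hε.le, ← Real.sqrt_eq_rpow,
            one_div]
        have hsing : |ε ^ (-(1:ℝ)/2) * wz x z| ≤ M / y := by
          rw [abs_mul, hepow, abs_of_nonneg (by positivity : (0:ℝ) ≤ 1 / Real.sqrt ε)]
          have h1 : (1:ℝ) / Real.sqrt ε = z / y := by
            rw [hzdef]; field_simp
          rw [h1, div_mul_eq_mul_div]
          gcongr
        have hFTC : ∫ t in (0:ℝ)..y, Uy x t = U₂ x y - U₂ x 0 :=
          intervalIntegral.integral_eq_sub_of_hasDerivAt (fun t _ => hUy x t)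
            (hcontx.intervalIntegrable 0 y)
        have hU2 : |U₂ x y| ≤ ∫ t in Ioo (0:ℝ) y, |Uy x t| := by
          have h2 : |∫ t in (0:ℝ)..y, Uy x t| ≤ ∫ t in (0:ℝ)..y, |Uy x t| :=
            intervalIntegral.abs_integral_le_integral_abs hy.le
          rw [hFTC, hU₂0 x, sub_zero] at h2
          rwa [intervalIntegral.integral_of_le hy.le,
            MeasureTheory.integral_Ioc_eq_integral_Ioo] at h2
        have hUyOn : IntegrableOn (fun t => |Uy x t|) (Ioo 0 y) :=
          (intervalIntegrable_iff_integrableOn_Ioo_of_le hy.le).1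
            (hcontx.abs.intervalIntegrable 0 y)
        have hIntnn : 0 ≤ ∫ t in Ioo (0:ℝ) y, |Uy x t| :=
          integral_nonneg fun t => abs_nonneg _
        have hfb : |f (x, y)| ≤ (∫ t in Ioo (0:ℝ) y, |Uy x t|) * (M / y * |W x y|) := by
          have e0 : f (x, y) = U₂ x y * (ε ^ (-(1:ℝ)/2) * wz x z) * W x y := rfl
          rw [e0, abs_mul, abs_mul]
          calc |U₂ x y| * |ε ^ (-(1:ℝ)/2) * wz x z| * |W x y|
              ≤ (∫ t in Ioo (0:ℝ) y, |Uy x t|) * (M / y) * |W x y| :=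
                mul_le_mul (mul_le_mul hU2 hsing (abs_nonneg _) hIntnn) le_rfl (abs_nonneg _)
                  (mul_nonneg hIntnn (div_nonneg hM hy.le))
            _ = _ := by ring
        have e1 : ENNReal.ofReal ((∫ t in Ioo (0:ℝ) y, |Uy x t|) * (M / y * |W x y|))
            = ∫⁻ t in Ioo (0:ℝ) y, ENNReal.ofReal (|Uy x t| * (M / y * |W x y|)) := by
          rw [ENNReal.ofReal_mul hIntnn,
            ofReal_integral_eq_lintegral_ofReal hUyOn
              (Filter.Eventually.of_forall fun t => abs_nonneg _),
            ← lintegral_mul_const' _ _ ENNReal.ofReal_ne_top]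
          exact lintegral_congr fun t => (ENNReal.ofReal_mul (abs_nonneg _)).symm
        calc ENNReal.ofReal |f (x, y)|
            ≤ ENNReal.ofReal ((∫ t in Ioo (0:ℝ) y, |Uy x t|) * (M / y * |W x y|)) :=
              ENNReal.ofReal_le_ofReal hfb
          _ = _ := e1
          _ ≤ _ := by
              refine setLIntegral_mono' measurableSet_Ioo fun t ht => ?_
              have hkey := key_ineq' M l (Uy x t) (W x y) t y hM hl ht.1 hy
              have harr : |Uy x t| * (M / y * |W x y|) = M * (|Uy x t| * |W x y|) / y := by
                ring
              rw [harr]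
              exact le_trans (ENNReal.ofReal_le_ofReal hkey) ENNReal.ofReal_add_le
      -- measurability of the F1 kernel on ℝ × ℝ  (variables (t, y))
      have hmF1 : Measurable fun q : ℝ × ℝ =>
          ENNReal.ofReal ((M * l / 2 * Uy x q.1 ^ 2 * Real.sqrt q.1)
            * (1 / (q.2 * Real.sqrt q.2))) := by
        apply ENNReal.measurable_ofReal.comp
        apply Measurable.mul
        · exact ((continuous_const.mul
            ((hUycont.comp (continuous_const.prodMk continuous_fst)).pow 2)).mul
            (Real.continuous_sqrt.comp continuous_fst)).measurable
        · exact measurable_const.div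
            ((continuous_snd.mul (Real.continuous_sqrt.comp continuous_snd)).measurable)
      -- per-y evaluation of the second t-integral
      have hb : ∀ y ∈ Ioi (0:ℝ),
          (∫⁻ t in Ioo (0:ℝ) y,
            (ENNReal.ofReal ((M * l / 2 * Uy x t ^ 2 * Real.sqrt t) * (1 / (y * Real.sqrt y)))
              + ENNReal.ofReal ((M / (2 * l) * W x y ^ 2 / Real.sqrt y) * (1 / Real.sqrt t))))
          = (∫⁻ t in Ioo (0:ℝ) y,
              ENNReal.ofReal ((M * l / 2 * Uy x t ^ 2 * Real.sqrt t) * (1 / (y * Real.sqrt y))))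
            + ENNReal.ofReal (M / l * W x y ^ 2) := by
        intro y hy
        rw [mem_Ioi] at hy
        have hsy : 0 < Real.sqrt y := Real.sqrt_pos.2 hy
        have hcW : 0 ≤ M / (2 * l) * W x y ^ 2 / Real.sqrt y :=
          div_nonneg (mul_nonneg (div_nonneg hM (by positivity)) (sq_nonneg _)) hsy.le
        rw [lintegral_add_left]
        · congr 1
          have hpt : ∀ t : ℝ,
              ENNReal.ofReal ((M / (2 * l) * W x y ^ 2 / Real.sqrt y) * (1 / Real.sqrt t))
              = ENNReal.ofReal (M / (2 * l) * W x y ^ 2 / Real.sqrt y)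
                * ENNReal.ofReal (1 / Real.sqrt t) :=
            fun t => ENNReal.ofReal_mul hcW
          simp_rw [hpt]
          rw [lintegral_const_mul' _ _ ENNReal.ofReal_ne_top, lint_t hy,
            ← ENNReal.ofReal_mul hcW]
          congr 1
          field_simp
        · exact (ENNReal.measurable_ofReal.comp
            (((continuous_const.mul ((hUycont.comp
              (continuous_const.prodMk continuous_id)).pow 2)).mul
              Real.continuous_sqrt).mul continuous_const).measurable)
      -- per-t evaluation of the swapped y-integral
      have hc : ∀ t ∈ Ioi (0:ℝ),
          (∫⁻ y in Ioi t,
            ENNReal.ofReal ((M * l / 2 * Uy x t ^ 2 * Real.sqrt t) * (1 / (y * Real.sqrt y))))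
          = ENNReal.ofReal (l * M * Uy x t ^ 2) := by
        intro t ht
        rw [mem_Ioi] at ht
        have hst : 0 < Real.sqrt t := Real.sqrt_pos.2 ht
        have hc1 : 0 ≤ M * l / 2 * Uy x t ^ 2 * Real.sqrt t :=
          mul_nonneg (mul_nonneg (by positivity) (sq_nonneg _)) hst.le
        have hpt : ∀ y : ℝ,
            ENNReal.ofReal ((M * l / 2 * Uy x t ^ 2 * Real.sqrt t) * (1 / (y * Real.sqrt y)))
            = ENNReal.ofReal (M * l / 2 * Uy x t ^ 2 * Real.sqrt t)
              * ENNReal.ofReal (1 / (y * Real.sqrt y)) :=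
          fun y => ENNReal.ofReal_mul hc1
        simp_rw [hpt]
        rw [lintegral_const_mul' _ _ ENNReal.ofReal_ne_top, lint_y ht,
          ← ENNReal.ofReal_mul hc1]
        congr 1
        have harr : M * l / 2 * Uy x t ^ 2 * Real.sqrt t * (2 / Real.sqrt t)
            = l * M * Uy x t ^ 2 * (Real.sqrt t / Real.sqrt t) := by ring
        rw [harr, div_self hst.ne', mul_one]
      calc ∫⁻ y in Ioi (0:ℝ), ENNReal.ofReal |f (x, y)|
          ≤ ∫⁻ y in Ioi (0:ℝ), ∫⁻ t in Ioo (0:ℝ) y,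
              (ENNReal.ofReal ((M * l / 2 * Uy x t ^ 2 * Real.sqrt t) * (1 / (y * Real.sqrt y)))
                + ENNReal.ofReal ((M / (2 * l) * W x y ^ 2 / Real.sqrt y) * (1 / Real.sqrt t))) :=
            setLIntegral_mono' measurableSet_Ioi fun y hy => ha y (mem_Ioi.1 hy)
        _ = ∫⁻ y in Ioi (0:ℝ),
              ((∫⁻ t in Ioo (0:ℝ) y, ENNReal.ofReal
                ((M * l / 2 * Uy x t ^ 2 * Real.sqrt t) * (1 / (y * Real.sqrt y))))
              + ENNReal.ofReal (M / l * W x y ^ 2)) :=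
            setLIntegral_congr_fun measurableSet_Ioi hb
        _ = (∫⁻ y in Ioi (0:ℝ), ∫⁻ t in Ioo (0:ℝ) y, ENNReal.ofReal
                ((M * l / 2 * Uy x t ^ 2 * Real.sqrt t) * (1 / (y * Real.sqrt y))))
              + ∫⁻ y in Ioi (0:ℝ), ENNReal.ofReal (M / l * W x y ^ 2) :=
            lintegral_add_right _ (ENNReal.measurable_ofReal.comp
              (continuous_const.mul ((hWcont.comp
                (continuous_const.prodMk continuous_id)).pow 2)).measurable)
        _ = (∫⁻ t in Ioi (0:ℝ), ∫⁻ y in Ioi t, ENNReal.ofReal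
                ((M * l / 2 * Uy x t ^ 2 * Real.sqrt t) * (1 / (y * Real.sqrt y))))
              + ∫⁻ y in Ioi (0:ℝ), ENNReal.ofReal (M / l * W x y ^ 2) := by
            rw [lintegral_triangle_swap
              (fun t y => ENNReal.ofReal
                ((M * l / 2 * Uy x t ^ 2 * Real.sqrt t) * (1 / (y * Real.sqrt y)))) hmF1]
        _ = (∫⁻ t in Ioi (0:ℝ), ENNReal.ofReal (l * M * Uy x t ^ 2))
              + ∫⁻ y in Ioi (0:ℝ), ENNReal.ofReal (M / l * W x y ^ 2) := by
            rw [setLIntegral_congr_fun measurableSet_Ioi hc]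
    -- outer assembly
    have hfm : Measurable fun p : ℝ × ℝ => ENNReal.ofReal |f p| :=
      ENNReal.measurable_ofReal.comp hfc.abs.measurable
    have houter : (∫⁻ p in S, ENNReal.ofReal |f p|)
        ≤ ENNReal.ofReal (l * (M * A) + (M * B) / l) := by
      rw [hrestrict, lintegral_prod _ hfm.aemeasurable]
      have hmu : Measurable (Function.uncurry fun x t =>
          ENNReal.ofReal (l * M * Uy x t ^ 2)) :=
        ENNReal.measurable_ofReal.comp
          (continuous_const.mul (hUycont.pow 2)).measurable
      calc ∫⁻ x : ℝ, ∫⁻ y in Ioi (0:ℝ), ENNReal.ofReal |f (x, y)|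
          ≤ ∫⁻ x : ℝ, ((∫⁻ t in Ioi (0:ℝ), ENNReal.ofReal (l * M * Uy x t ^ 2))
              + ∫⁻ y in Ioi (0:ℝ), ENNReal.ofReal (M / l * W x y ^ 2)) :=
            lintegral_mono inner
        _ = (∫⁻ x : ℝ, ∫⁻ t in Ioi (0:ℝ), ENNReal.ofReal (l * M * Uy x t ^ 2))
              + ∫⁻ x : ℝ, ∫⁻ y in Ioi (0:ℝ), ENNReal.ofReal (M / l * W x y ^ 2) :=
            lintegral_add_left (Measurable.lintegral_prod_right hmu) _
        _ = ENNReal.ofReal (l * M) * ENNReal.ofReal A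
              + ENNReal.ofReal (M / l) * ENNReal.ofReal B := by
            congr 1
            · have hpt : ∀ (x t : ℝ), ENNReal.ofReal (l * M * Uy x t ^ 2)
                  = ENNReal.ofReal (l * M) * ENNReal.ofReal (Uy x t ^ 2) :=
                fun x t => ENNReal.ofReal_mul (mul_nonneg hl.le hM)
              simp_rw [hpt, lintegral_const_mul' (ENNReal.ofReal (l * M)) _
                ENNReal.ofReal_ne_top]
              congr 1
              rw [← hUyint', hrestrict,
                lintegral_prod (fun p : ℝ × ℝ => ENNReal.ofReal (Uy p.1 p.2 ^ 2))
                  (show Measurable fun p : ℝ × ℝ => ENNReal.ofReal (Uy p.1 p.2 ^ 2) from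
                    ENNReal.measurable_ofReal.comp
                    (hUycont.pow 2).measurable).aemeasurable]
            · have hpt : ∀ (x y : ℝ), ENNReal.ofReal (M / l * W x y ^ 2)
                  = ENNReal.ofReal (M / l) * ENNReal.ofReal (W x y ^ 2) :=
                fun x y => ENNReal.ofReal_mul (div_nonneg hM hl.le)
              simp_rw [hpt, lintegral_const_mul' (ENNReal.ofReal (M / l)) _
                ENNReal.ofReal_ne_top]
              congr 1
              rw [← hWint', hrestrict,
                lintegral_prod (fun p : ℝ × ℝ => ENNReal.ofReal (W p.1 p.2 ^ 2))
                  (show Measurable fun p : ℝ × ℝ => ENNReal.ofReal (W p.1 p.2 ^ 2) from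
                    ENNReal.measurable_ofReal.comp
                    (hWcont.pow 2).measurable).aemeasurable]
        _ = ENNReal.ofReal (l * (M * A) + (M * B) / l) := by
            rw [← ENNReal.ofReal_mul (mul_nonneg hl.le hM),
              ← ENNReal.ofReal_mul (div_nonneg hM hl.le),
              ← ENNReal.ofReal_add (mul_nonneg (mul_nonneg hl.le hM) hA0)
                (mul_nonneg (div_nonneg hM hl.le) hB0)]
            congr 1
            ring
    have h1 : |∫ p in S, f p| ≤ ∫ p in S, |f p| := by
      simpa [Real.norm_eq_abs] using norm_integral_le_integral_norm (μ := volume.restrict S) f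
    have h2 : ENNReal.ofReal (∫ p in S, |f p|) = ∫⁻ p in S, ENNReal.ofReal |f p| :=
      ofReal_integral_eq_lintegral_ofReal hprod.abs
        (Filter.Eventually.of_forall fun p => abs_nonneg _)
    have hR : 0 ≤ l * (M * A) + (M * B) / l :=
      add_nonneg (mul_nonneg hl.le (mul_nonneg hM hA0))
        (div_nonneg (mul_nonneg hM hB0) hl.le)
    have h3 : (∫ p in S, |f p|) ≤ l * (M * A) + (M * B) / l := by
      rw [← ENNReal.ofReal_le_ofReal_iff hR, h2]
      exact houter
    linarith
  have key := le_two_sqrt_mul (mul_nonneg hM hA0) (mul_nonneg hM hB0) main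
  calc |∫ p in S, f p| ≤ 2 * Real.sqrt (M * A) * Real.sqrt (M * B) := key
    _ = 2 * Real.sqrt A * M * Real.sqrt B := by
        rw [Real.sqrt_mul hM, Real.sqrt_mul hM,
          show (2:ℝ) * (Real.sqrt M * Real.sqrt A) * (Real.sqrt M * Real.sqrt B)
            = 2 * Real.sqrt A * (Real.sqrt M * Real.sqrt M) * Real.sqrt B by ring,
          Real.mul_self_sqrt hM]
end
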